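/- arXiv:1704.03011 — 4 statements merged into one kernel-verified Lean document; each statement's English description precedes it below -/
import Mathlib

section
/- Let h > 0, p ≤ 0, q ≥ 0 with -p ≥ q, and let γ ≤ 0 be the unique real solution of γ - p = q e^{-hγ}. For each ζ ∈ ℝ let λ(ζ) be the unique real solution of λ = -ζ² + p + q e^{-hλ}. Set ε_h = 1/(1 + h(γ - p)). Then for all ζ ∈ ℝ: -ε_h ζ² + γ ≤ λ(ζ) ≤ γ - (1/h)·log(1 + h ε_h ζ²). -/
theorem stmt5 (h p q γ : ℝ) (hh : 0 < h) (hp : p ≤ 0) (hq : 0 ≤ q) (hpq : q ≤ -p)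
    (hγ : γ ≤ 0) (hγeq : γ - p = q * Real.exp (-h * γ))
    (lam : ℝ → ℝ) (hlam : ∀ ζ, lam ζ = -ζ^2 + p + q * Real.exp (-h * lam ζ)) :
    ∀ ζ : ℝ,
      -(1 / (1 + h * (γ - p))) * ζ^2 + γ ≤ lam ζ ∧
      lam ζ ≤ γ - (1 / h) * Real.log (1 + h * (1 / (1 + h * (γ - p))) * ζ^2) := by
  intro ζ
  have hγp : 0 ≤ γ - p := by
    rw [hγeq]; positivity
  have hD : (0:ℝ) < 1 + h * (γ - p) := by nlinarith
  set ε : ℝ := 1 / (1 + h * (γ - p)) with hεdef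
  have hεpos : 0 < ε := by positivity
  have hεD : ε * (1 + h * (γ - p)) = 1 := by
    rw [hεdef]; field_simp
  have hqe : q * Real.exp (-h * γ) = γ - p := hγeq.symm
  have hL := hlam ζ
  set L := lam ζ with hLdef
  have hFL : L + ζ^2 - p - q * Real.exp (-h * L) = 0 := by linarith
  have hsq : (0:ℝ) ≤ ζ^2 := sq_nonneg ζ
  have hkey : (γ - p) * h * ε * ζ^2 = ζ^2 - ε * ζ^2 := by
    linear_combination ζ^2 * hεD
  constructor
  · -- lower bound
    by_contra hc
    push_neg at hc
    have hexp : Real.exp (-h * (-ε * ζ^2 + γ)) =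
        Real.exp (-h * γ) * Real.exp (h * ε * ζ^2) := by
      rw [← Real.exp_add]; ring_nf
    have h1 : h * ε * ζ^2 + 1 ≤ Real.exp (h * ε * ζ^2) := Real.add_one_le_exp _
    have hq' : 0 ≤ q * Real.exp (-h * γ) := by positivity
    have hFa : (-ε * ζ^2 + γ) + ζ^2 - p - q * Real.exp (-h * (-ε * ζ^2 + γ)) ≤ 0 := by
      rw [hexp]
      have hmm : (γ - p) * (h * ε * ζ^2 + 1) ≤
          q * Real.exp (-h * γ) * Real.exp (h * ε * ζ^2) := by
        rw [← hqe]
        exact mul_le_mul_of_nonneg_left h1 hq'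
      nlinarith [hkey, hmm]
    have hmono : q * Real.exp (-h * (-ε * ζ^2 + γ)) ≤ q * Real.exp (-h * L) := by
      apply mul_le_mul_of_nonneg_left _ hq
      apply Real.exp_le_exp.mpr
      nlinarith
    linarith
  · -- upper bound
    by_contra hc
    push_neg at hc
    have hx : (0:ℝ) ≤ h * ε * ζ^2 := by positivity
    have hx1 : (0:ℝ) < 1 + h * ε * ζ^2 := by linarith
    have hexp : Real.exp (-h * (γ - (1/h) * Real.log (1 + h * ε * ζ^2))) =
        Real.exp (-h * γ) * (1 + h * ε * ζ^2) := by
      rw [show -h * (γ - (1/h) * Real.log (1 + h * ε * ζ^2)) =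
          -h * γ + Real.log (1 + h * ε * ζ^2) by field_simp; ring,
        Real.exp_add, Real.exp_log hx1]
    have hlog : Real.log (1 + h * ε * ζ^2) ≤ h * ε * ζ^2 := by
      have := Real.log_le_sub_one_of_pos hx1
      linarith
    have hFb : 0 ≤ (γ - (1/h) * Real.log (1 + h * ε * ζ^2)) + ζ^2 - p -
        q * Real.exp (-h * (γ - (1/h) * Real.log (1 + h * ε * ζ^2))) := by
      rw [hexp]
      have h1h : (1/h) * Real.log (1 + h * ε * ζ^2) ≤ ε * ζ^2 := by
        rw [div_mul_eq_mul_div, div_le_iff₀ hh]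
        nlinarith
      have hqq : q * (Real.exp (-h * γ) * (1 + h * ε * ζ^2)) =
          (γ - p) * (1 + h * ε * ζ^2) := by
        rw [← hqe]; ring
      nlinarith [hkey, hqq, h1h]
    have hmono : q * Real.exp (-h * L) ≤
        q * Real.exp (-h * (γ - (1/h) * Real.log (1 + h * ε * ζ^2))) := by
      apply mul_le_mul_of_nonneg_left _ hq
      apply Real.exp_le_exp.mpr
      nlinarith
    linarith
end

section
/- Let h > 0, p ∈ ℝ, q > 0, and for each ζ ∈ ℝ let λ(ζ) be the unique real solution of λ = -ζ² + p + q e^{-hλ}. Then λ(ζ)/log(ζ) → -2/h as ζ → ∞. -/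
open Filter

set_option maxHeartbeats 1000000 in
theorem stmt6 (h p q : ℝ) (hh : 0 < h) (hq : 0 < q)
    (lam : ℝ → ℝ) (hlam : ∀ ζ, lam ζ = -ζ^2 + p + q * Real.exp (-h * lam ζ)) :
    Tendsto (fun ζ => lam ζ / Real.log ζ) atTop (nhds (-2 / h)) := by
  -- monotonicity-based comparison lemmas
  have key₁ : ∀ ζ x : ℝ, x + ζ^2 - p - q * Real.exp (-h*x) ≤ 0 → x ≤ lam ζ := by
    intro ζ x hx
    by_contra hc
    push_neg at hc
    have he : Real.exp (-h * x) < Real.exp (-h * lam ζ) :=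
      Real.exp_lt_exp.mpr (by nlinarith)
    have h0 := hlam ζ
    nlinarith [Real.exp_pos (-h * x)]
  have key₂ : ∀ ζ x : ℝ, 0 ≤ x + ζ^2 - p - q * Real.exp (-h*x) → lam ζ ≤ x := by
    intro ζ x hx
    by_contra hc
    push_neg at hc
    have he : Real.exp (-h * lam ζ) < Real.exp (-h * x) :=
      Real.exp_lt_exp.mpr (by nlinarith)
    have h0 := hlam ζ
    nlinarith [Real.exp_pos (-h * lam ζ)]
  rw [Metric.tendsto_nhds]
  intro ε hε
  set δ := min (ε/2) (1/h) with hδdef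
  have hδ0 : 0 < δ := lt_min (by linarith) (by positivity)
  have hδε : δ ≤ ε/2 := min_le_left _ _
  have hδh : h * δ ≤ 1 := by
    have h1 : δ ≤ 1/h := min_le_right _ _
    calc h * δ ≤ h * (1/h) := by nlinarith
      _ = 1 := by field_simp
  have hhδ0 : 0 < h * δ := by positivity
  have E1 : ∀ᶠ ζ : ℝ in atTop, (1:ℝ) < ζ := eventually_gt_atTop 1
  have E2 : ∀ᶠ ζ : ℝ in atTop, 2/q ≤ ζ ^ (h*δ) :=
    (tendsto_rpow_atTop hhδ0).eventually_ge_atTop _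
  have E3 : ∀ᶠ ζ : ℝ in atTop, -p ≤ ζ := eventually_ge_atTop _
  have E4 : ∀ᶠ ζ : ℝ in atTop, q * ζ ^ (-(h*δ)) ≤ 1/4 := by
    have ht : Tendsto (fun ζ : ℝ => q * ζ ^ (-(h*δ))) atTop (nhds (q * 0)) :=
      (tendsto_rpow_neg_atTop hhδ0).const_mul q
    rw [mul_zero] at ht
    exact (ht.eventually_lt_const (by norm_num : (0:ℝ) < 1/4)).mono fun x hx => hx.le
  have E5 : ∀ᶠ ζ : ℝ in atTop, 8/h ≤ ζ := eventually_ge_atTop _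
  have E6 : ∀ᶠ ζ : ℝ in atTop, 2*p ≤ ζ := eventually_ge_atTop _
  filter_upwards [E1, E2, E3, E4, E5, E6] with ζ h1 h2 h3 h4 h5 h6
  have hζ0 : (0:ℝ) < ζ := lt_trans one_pos h1
  have hL : 0 < Real.log ζ := Real.log_pos h1
  have hlogle : Real.log ζ ≤ ζ := (Real.log_le_sub_one_of_pos hζ0).trans (by linarith)
  have r2 : ζ ^ ((2:ℝ)) = ζ^2 := by
    rw [show ((2:ℝ) = ((2:ℕ) : ℝ)) by norm_num, Real.rpow_natCast]
  -- lower bound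
  set a := -(2/h + δ) * Real.log ζ with ha_def
  have hexp_a : Real.exp (-h * a) = ζ^2 * ζ^(h*δ) := by
    have e1 : -h * a = (2 + h*δ) * Real.log ζ := by
      rw [ha_def]; field_simp
    rw [e1, mul_comm, ← Real.rpow_def_of_pos hζ0, Real.rpow_add hζ0, r2]
  have ha : a ≤ lam ζ := by
    apply key₁
    rw [hexp_a]
    have ha0 : a ≤ 0 := by
      rw [ha_def]
      have : 0 < 2/h + δ := by positivity
      nlinarith [hL.le]
    have h2' : 2 ≤ ζ ^ (h*δ) * q := (div_le_iff₀ hq).mp h2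
    nlinarith [sq_nonneg ζ, h1, h3, ha0, mul_le_mul_of_nonneg_left h2' (sq_nonneg ζ)]
  -- upper bound
  set b := -(2/h - δ) * Real.log ζ with hb_def
  have hexp_b : Real.exp (-h * b) = ζ^2 * ζ^(-(h*δ)) := by
    have e1 : -h * b = (2 - h*δ) * Real.log ζ := by
      rw [hb_def]; field_simp
    rw [e1, mul_comm, ← Real.rpow_def_of_pos hζ0,
      show (2 - h*δ : ℝ) = 2 + (-(h*δ)) by ring, Real.rpow_add hζ0, r2]
  have hb : lam ζ ≤ b := by
    apply key₂
    rw [hexp_b]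
    have t1 : q * ζ^(-(h*δ)) * ζ^2 ≤ (1/4) * ζ^2 :=
      mul_le_mul_of_nonneg_right h4 (sq_nonneg ζ)
    have h5' : 8 ≤ h * ζ := by
      rw [div_le_iff₀ hh] at h5; linarith [mul_comm ζ h]
    have t2 : (2/h) * ζ ≤ ζ^2/4 := by
      rw [div_mul_eq_mul_div, div_le_div_iff₀ hh (by norm_num : (0:ℝ) < 4)]
      nlinarith [mul_le_mul_of_nonneg_right h5' hζ0.le]
    have t3 : p ≤ ζ^2/2 := by nlinarith
    have t4 : -(2/h) * Real.log ζ + δ * Real.log ζ = b := by rw [hb_def]; ring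
    have t5 : -(2/h) * ζ ≤ -(2/h) * Real.log ζ := by
      have h2h : 0 ≤ 2/h := by positivity
      have := mul_le_mul_of_nonneg_left hlogle h2h
      linarith
    linarith [t1, t2, t3, t4, t5, mul_nonneg hδ0.le hL.le]
  -- conclude
  have hdiva : a / Real.log ζ = -(2/h + δ) := by
    rw [ha_def, mul_div_assoc, div_self hL.ne', mul_one]
  have hdivb : b / Real.log ζ = -(2/h - δ) := by
    rw [hb_def, mul_div_assoc, div_self hL.ne', mul_one]
  have d1 : -(2/h + δ) ≤ lam ζ / Real.log ζ := by
    rw [← hdiva]; exact (div_le_div_iff_of_pos_right hL).mpr ha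
  have d2 : lam ζ / Real.log ζ ≤ -(2/h - δ) := by
    rw [← hdivb]; exact (div_le_div_iff_of_pos_right hL).mpr hb
  rw [Real.dist_eq, show (-2/h : ℝ) = -(2/h) by ring, abs_lt]
  constructor <;> linarith [d1, d2, hδε, hε]
end

section
/- Let h > 0, p ∈ ℝ, q > 0, and for each ζ ∈ ℝ let λ(ζ) be the unique real solution of λ = -ζ² + p + q e^{-hλ}. Then lim_{ζ → ∞} e^{-h λ(ζ)}/ζ² = 1/q. -/
open Filter

theorem stmt8 (h p q : ℝ) (hh : 0 < h) (hq : 0 < q)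
    (lam : ℝ → ℝ) (hlam : ∀ ζ, lam ζ = -ζ^2 + p + q * Real.exp (-h * lam ζ)) :
    Tendsto (fun ζ => Real.exp (-h * lam ζ) / ζ^2) atTop (nhds (1 / q)) := by
  have hsq : Tendsto (fun ζ : ℝ => ζ^2) atTop atTop :=
    tendsto_pow_atTop (by norm_num)
  -- eventually lam ζ < 0
  have hneg : ∀ᶠ ζ in atTop, lam ζ < 0 := by
    filter_upwards [hsq.eventually_gt_atTop (p + q)] with ζ h1
    by_contra hc
    push_neg at hc
    have he : Real.exp (-h * lam ζ) ≤ 1 := by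
      apply Real.exp_le_one_iff.mpr
      nlinarith
    nlinarith [hlam ζ]
  -- eventual log lower bound for lam
  have hlow : ∀ᶠ ζ in atTop, -(Real.log ((ζ^2 - p)/q) / h) ≤ lam ζ := by
    filter_upwards [hneg, hsq.eventually_gt_atTop (p + 1)] with ζ h1 h2
    have hpos : 0 < (ζ^2 - p)/q := by
      apply div_pos (by linarith) hq
    have he : Real.exp (-h * lam ζ) ≤ (ζ^2 - p)/q := by
      rw [le_div_iff₀ hq]
      nlinarith [hlam ζ]
    have hle : -h * lam ζ ≤ Real.log ((ζ^2 - p)/q) :=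
      (Real.le_log_iff_exp_le hpos).mpr he
    have : -lam ζ ≤ Real.log ((ζ^2 - p)/q) / h := by
      rw [le_div_iff₀ hh]
      nlinarith
    linarith
  -- log((ζ²-p)/q)/ζ² → 0
  have hlog0 : Tendsto (fun ζ : ℝ => Real.log ((ζ^2 - p)/q) / ζ^2) atTop (nhds 0) := by
    have h1 : Tendsto (fun ζ : ℝ => ζ^2 - p) atTop atTop :=
      tendsto_atTop_add_const_right _ _ hsq
    have h2 : Tendsto (fun x : ℝ => Real.log x / x) atTop (nhds 0) :=
      Real.isLittleO_log_id_atTop.tendsto_div_nhds_zero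
    have h3 : Tendsto (fun ζ : ℝ => Real.log (ζ^2 - p) / (ζ^2 - p)) atTop (nhds 0) :=
      h2.comp h1
    have h4 : Tendsto (fun ζ : ℝ => (ζ^2 - p) / ζ^2) atTop (nhds 1) := by
      have hp0 : Tendsto (fun ζ : ℝ => p / ζ^2) atTop (nhds 0) :=
        tendsto_const_nhds.div_atTop hsq
      have := (tendsto_const_nhds (x := (1:ℝ)) (f := atTop)).sub hp0
      rw [sub_zero] at this
      apply this.congr'
      filter_upwards [eventually_ne_atTop (0:ℝ)] with ζ hz
      have : (ζ:ℝ)^2 ≠ 0 := pow_ne_zero _ hz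
      field_simp
    have h5 : Tendsto (fun ζ : ℝ => Real.log (ζ^2 - p) / ζ^2) atTop (nhds 0) := by
      have := h3.mul h4
      rw [mul_one] at this
      apply this.congr'
      filter_upwards [h1.eventually_gt_atTop 0, eventually_ne_atTop (0:ℝ)] with ζ h1' hz
      have hz2 : (ζ:ℝ)^2 ≠ 0 := pow_ne_zero _ hz
      field_simp
    have hq0 : Tendsto (fun ζ : ℝ => Real.log q / ζ^2) atTop (nhds 0) :=
      tendsto_const_nhds.div_atTop hsq
    have := h5.sub hq0
    rw [sub_zero] at this
    apply this.congr'
    filter_upwards [h1.eventually_gt_atTop 0] with ζ h1'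
    rw [Real.log_div (by linarith) (ne_of_gt hq)]
    ring
  -- lam ζ / ζ² → 0
  have hmid : Tendsto (fun ζ => lam ζ / ζ^2) atTop (nhds 0) := by
    have hlo : Tendsto (fun ζ : ℝ => -(Real.log ((ζ^2 - p)/q) / h) / ζ^2) atTop (nhds 0) := by
      have := (hlog0.const_mul (-(1/h)))
      rw [mul_zero] at this
      apply this.congr
      intro ζ
      ring
    apply tendsto_of_tendsto_of_tendsto_of_le_of_le' hlo tendsto_const_nhds
    · filter_upwards [hlow, hsq.eventually_gt_atTop 0] with ζ hl hz
      exact div_le_div_of_nonneg_right hl hz.le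
    · filter_upwards [hneg, hsq.eventually_gt_atTop 0] with ζ hn hz
      exact le_of_lt (div_neg_of_neg_of_pos hn hz)
  -- conclude
  have hp0 : Tendsto (fun ζ : ℝ => p / ζ^2) atTop (nhds 0) :=
    tendsto_const_nhds.div_atTop hsq
  have hfinal : Tendsto (fun ζ => (lam ζ / ζ^2 + 1 - p / ζ^2) / q) atTop (nhds (1/q)) := by
    have := ((hmid.add_const 1).sub hp0).div_const q
    rw [zero_add, sub_zero] at this
    exact this
  apply hfinal.congr'
  filter_upwards [eventually_ne_atTop (0:ℝ)] with ζ hz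
  have hz2 : (ζ:ℝ)^2 ≠ 0 := pow_ne_zero _ hz
  have hex : Real.exp (-h * lam ζ) = (lam ζ + ζ^2 - p)/q := by
    rw [eq_div_iff (ne_of_gt hq)]
    linarith [hlam ζ]
  rw [hex, div_div, mul_comm q (ζ^2), ← div_div]
  congr 1
  field_simp
end

section
/- Let L > 1 and h > 0. For c > 0 define E_c(λ) = -λ² + cλ + 1 - L e^{-λ c h}. Then the set {c > 0 : ∃ λ₀ ∈ ℝ, E_c(λ₀) ≥ 0} is nonempty, and its infimum c(L) is positive. -/
theorem stmt12 (L h : ℝ) (hL : 1 < L) (hh : 0 < h) :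
    {c : ℝ | 0 < c ∧ ∃ l : ℝ, 0 ≤ -l^2 + c * l + 1 - L * Real.exp (-l * c * h)}.Nonempty ∧
    0 < sInf {c : ℝ | 0 < c ∧ ∃ l : ℝ, 0 ≤ -l^2 + c * l + 1 - L * Real.exp (-l * c * h)} := by
  have hL0 : (0:ℝ) < L := lt_trans one_pos hL
  have hne : {c : ℝ | 0 < c ∧ ∃ l : ℝ,
      0 ≤ -l^2 + c * l + 1 - L * Real.exp (-l * c * h)}.Nonempty := by
    refine ⟨L, hL0, 1, ?_⟩
    have h1 : Real.exp (-1 * L * h) < 1 := by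
      apply Real.exp_lt_one_iff.mpr
      nlinarith
    nlinarith
  refine ⟨hne, ?_⟩
  set δ := 2 * Real.sqrt (L - 1) / (1 + L * h) with hδ
  have hs : 0 < Real.sqrt (L - 1) := Real.sqrt_pos.mpr (by linarith)
  have hd : (0:ℝ) < 1 + L * h := by nlinarith
  have hδpos : 0 < δ := by positivity
  have hlb : ∀ c ∈ {c : ℝ | 0 < c ∧ ∃ l : ℝ,
      0 ≤ -l^2 + c * l + 1 - L * Real.exp (-l * c * h)}, δ ≤ c := by
    rintro c ⟨hc, l, hE⟩
    have hlpos : 0 < l := by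
      by_contra hle
      push_neg at hle
      have h1 : (1:ℝ) ≤ Real.exp (-l * c * h) :=
        Real.one_le_exp (mul_nonneg (mul_nonneg (by linarith : (0:ℝ) ≤ -l) hc.le) hh.le)
      nlinarith
    have hexp : (-l * c * h) + 1 ≤ Real.exp (-l * c * h) := Real.add_one_le_exp _
    have key : l ^ 2 + (L - 1) ≤ c * l * (1 + L * h) := by nlinarith
    have hsq : (l - Real.sqrt (L - 1))^2 ≥ 0 := sq_nonneg _
    have hs2 : Real.sqrt (L - 1) ^ 2 = L - 1 :=
      Real.sq_sqrt (by linarith)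
    have : 2 * Real.sqrt (L - 1) * l ≤ c * l * (1 + L * h) := by nlinarith
    have h2 : 2 * Real.sqrt (L - 1) ≤ c * (1 + L * h) := by
      have := (mul_le_mul_iff_of_pos_right hlpos).mp (by linarith [this] : 2 * Real.sqrt (L - 1) * l ≤ c * (1 + L * h) * l)
      linarith
    rw [hδ, div_le_iff₀ hd]
    linarith
  exact lt_of_lt_of_le hδpos (le_csInf hne hlb)
end
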